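/- Let e : (0,∞)² → ℝ be continuously differentiable and satisfy the first-order partial differential equation ρ·∂e/∂ρ(ρ,θ) + (2/3)·θ·∂e/∂θ(ρ,θ) = (2/3)·e(ρ,θ) for all ρ, θ > 0. Then, defining P(Z) := (2/3)·Z·e(Z,1) for Z > 0, one has e(ρ,θ) = (3/2)·(θ^{5/2}/ρ)·P(ρ θ^{−3/2}) for all ρ, θ > 0. -/

import Mathlib

open Set Filter Topology

/-- Scaling identity along characteristics. -/
lemma stmt8_aux (e : ℝ → ℝ → ℝ)
    (he : ContDiffOn ℝ 1 (fun q : ℝ × ℝ => e q.1 q.2) (Set.Ioi 0 ×ˢ Set.Ioi 0))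
    (hpde : ∀ ρ θ : ℝ, 0 < ρ → 0 < θ →
      ρ * deriv (fun r => e r θ) ρ + (2 / 3) * θ * deriv (fun t => e ρ t) θ =
        (2 / 3) * e ρ θ) :
    ∀ ρ θ : ℝ, 0 < ρ → 0 < θ →
      e ρ θ = θ * e (ρ * θ ^ (-(3 : ℝ) / 2)) 1 := by
  intro ρ θ hρ hθ
  have hopen : IsOpen (Set.Ioi (0:ℝ) ×ˢ Set.Ioi (0:ℝ)) := isOpen_Ioi.prod isOpen_Ioi
  have hdiff : ∀ p : ℝ × ℝ, 0 < p.1 → 0 < p.2 →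
      DifferentiableAt ℝ (fun q : ℝ × ℝ => e q.1 q.2) p := by
    intro p h1 h2
    exact (he.differentiableOn one_ne_zero).differentiableAt (hopen.mem_nhds ⟨h1, h2⟩)
  set c : ℝ := ρ * θ ^ (-(3 : ℝ) / 2) with hc
  have hcpos : 0 < c := mul_pos hρ (Real.rpow_pos_of_pos hθ _)
  -- the function G t = e(c t^{3/2}, t) / t has zero derivative on (0,∞)
  have key : ∀ t : ℝ, 0 < t →
      HasDerivAt (fun t : ℝ => e (c * t ^ ((3:ℝ)/2)) t / t) 0 t := by
    intro t ht
    have htne : t ≠ 0 := ne_of_gt ht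
    have hp1 : 0 < c * t ^ ((3:ℝ)/2) := mul_pos hcpos (Real.rpow_pos_of_pos ht _)
    have hD := hdiff (c * t ^ ((3:ℝ)/2), t) hp1 ht
    set L := fderiv ℝ (fun q : ℝ × ℝ => e q.1 q.2) (c * t ^ ((3:ℝ)/2), t) with hL
    have hFD : HasFDerivAt (fun q : ℝ × ℝ => e q.1 q.2) L (c * t ^ ((3:ℝ)/2), t) :=
      hD.hasFDerivAt
    -- partial derivatives
    have hd1 : deriv (fun r => e r t) (c * t ^ ((3:ℝ)/2)) = L (1, 0) := by
      have hγ : HasDerivAt (fun r : ℝ => ((r, t) : ℝ × ℝ)) ((1, 0) : ℝ × ℝ)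
          (c * t ^ ((3:ℝ)/2)) :=
        HasDerivAt.prodMk (hasDerivAt_id _) (hasDerivAt_const _ t)
      exact (HasFDerivAt.comp_hasDerivAt_of_eq _ hFD hγ rfl).deriv
    have hd2 : deriv (fun s => e (c * t ^ ((3:ℝ)/2)) s) t = L (0, 1) := by
      have hγ : HasDerivAt (fun s : ℝ => ((c * t ^ ((3:ℝ)/2), s) : ℝ × ℝ))
          ((0, 1) : ℝ × ℝ) t :=
        HasDerivAt.prodMk (hasDerivAt_const _ _) (hasDerivAt_id _)
      exact (HasFDerivAt.comp_hasDerivAt_of_eq _ hFD hγ rfl).deriv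
    -- derivative of the curve
    have hcurve : HasDerivAt (fun t : ℝ => c * t ^ ((3:ℝ)/2))
        (c * ((3:ℝ)/2 * t ^ ((3:ℝ)/2 - 1))) t :=
      (Real.hasDerivAt_rpow_const (Or.inl htne)).const_mul c
    have hγ : HasDerivAt (fun t : ℝ => ((c * t ^ ((3:ℝ)/2), t) : ℝ × ℝ))
        ((c * ((3:ℝ)/2 * t ^ ((3:ℝ)/2 - 1)), 1) : ℝ × ℝ) t :=
      HasDerivAt.prodMk hcurve (hasDerivAt_id t)
    have hF := HasFDerivAt.comp_hasDerivAt_of_eq _ hFD hγ rfl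
    -- linearity of L
    have hlin : ∀ x y : ℝ, L ((x, y) : ℝ × ℝ) = x * L (1,0) + y * L (0,1) := by
      intro x y
      have hxy : ((x, y) : ℝ × ℝ) = x • ((1,0) : ℝ × ℝ) + y • ((0,1) : ℝ × ℝ) := by
        simp [Prod.ext_iff]
      rw [hxy, L.map_add, L.map_smul, L.map_smul, smul_eq_mul, smul_eq_mul]
    -- the PDE at the point
    have hpde' := hpde (c * t ^ ((3:ℝ)/2)) t hp1 ht
    rw [hd1, hd2] at hpde'
    -- rpow arithmetic
    have h32 : t ^ ((3:ℝ)/2) = t * t ^ ((1:ℝ)/2) := by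
      rw [show (3:ℝ)/2 = 1 + 1/2 by norm_num, Real.rpow_add ht, Real.rpow_one]
    have h12 : t ^ ((3:ℝ)/2 - 1) = t ^ ((1:ℝ)/2) := by norm_num
    -- the derivative value equals e(...)/t
    have hval : L ((c * ((3:ℝ)/2 * t ^ ((3:ℝ)/2 - 1)), 1)) =
        e (c * t ^ ((3:ℝ)/2)) t / t := by
      rw [hlin, h12]
      rw [h32] at hpde' ⊢
      rw [eq_div_iff htne]
      linear_combination (3/2) * hpde'
    rw [hval] at hF
    -- quotient rule
    have hQ := hF.div (hasDerivAt_id t) htne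
    simp only [Function.comp, id] at hQ
    have hzero : (e (c * t ^ ((3:ℝ)/2)) t / t * t - e (c * t ^ ((3:ℝ)/2)) t * 1) /
        t ^ 2 = 0 := by
      field_simp
      ring
    rw [hzero] at hQ
    exact hQ
  -- constancy on Ioi 0
  set G : ℝ → ℝ := fun t => e (c * t ^ ((3:ℝ)/2)) t / t with hG
  have hconst : G θ = G 1 := by
    have hconv : Convex ℝ (Set.Ioi (0:ℝ)) := convex_Ioi 0
    have hdiffG : DifferentiableOn ℝ G (Set.Ioi 0) := fun t ht =>
      ((key t ht).differentiableAt).differentiableWithinAt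
    have hzero : ∀ t ∈ Set.Ioi (0:ℝ), fderivWithin ℝ G (Set.Ioi 0) t = 0 := by
      intro t ht
      rw [fderivWithin_of_isOpen isOpen_Ioi ht, (key t ht).hasFDerivAt.fderiv]
      ext
      simp
    exact hconv.is_const_of_fderivWithin_eq_zero hdiffG hzero hθ (by norm_num)
  have hρeq : c * θ ^ ((3:ℝ)/2) = ρ := by
    rw [hc, mul_assoc, ← Real.rpow_add hθ]
    norm_num
  have h1 : c * (1:ℝ) ^ ((3:ℝ)/2) = c := by
    rw [Real.one_rpow, mul_one]
  rw [hG] at hconst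
  simp only [hρeq, h1, div_one] at hconst
  field_simp at hconst
  linarith [hconst]

theorem stmt8 (e : ℝ → ℝ → ℝ)
    (he : ContDiffOn ℝ 1 (fun q : ℝ × ℝ => e q.1 q.2) (Set.Ioi 0 ×ˢ Set.Ioi 0))
    (hpde : ∀ ρ θ : ℝ, 0 < ρ → 0 < θ →
      ρ * deriv (fun r => e r θ) ρ + (2 / 3) * θ * deriv (fun t => e ρ t) θ =
        (2 / 3) * e ρ θ) :
    ∀ ρ θ : ℝ, 0 < ρ → 0 < θ →
      e ρ θ = (3 / 2) * (θ ^ ((5 : ℝ) / 2) / ρ) *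
        ((2 / 3) * (ρ * θ ^ (-(3 : ℝ) / 2)) * e (ρ * θ ^ (-(3 : ℝ) / 2)) 1) := by
  intro ρ θ hρ hθ
  have h := stmt8_aux e he hpde ρ θ hρ hθ
  have hmul : θ ^ ((5:ℝ)/2) * θ ^ (-(3:ℝ)/2) = θ := by
    rw [← Real.rpow_add hθ]
    norm_num
  rw [h]
  have hρne : ρ ≠ 0 := ne_of_gt hρ
  have hρinv : ρ * ρ⁻¹ = 1 := mul_inv_cancel₀ hρne
  linear_combination (-e (ρ * θ ^ (-(3:ℝ)/2)) 1) * hmul - (θ ^ ((5:ℝ)/2) * θ ^ (-(3:ℝ)/2) * e (ρ * θ ^ (-(3:ℝ)/2)) 1) * hρinv
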